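/- For every a > 0, every row vector b ∈ ℝ^n, and every m ∈ O(h), the matrix p(a,b,m) satisfies p(a,b,m)ᵀ h̃ p(a,b,m) = h̃ and p(a,b,m) e_0 = a e_0, so p(a,b,m) ∈ P; moreover the map (a,b,m) ↦ p(a,b,m) from ℝ_{>0} × ℝ^n × O(h) to P is injective. Hence P is parametrized bijectively by ℝ_{>0} × ℝ^n × O(h). -/
import Mathlib


open Matrix

noncomputable section

abbrev Idx (p q : ℕ) : Type := Unit ⊕ (Fin (p + q)) ⊕ Unit

/-- The diagonal quadratic form of signature `(p,q)` on `ℝ^n`, `n = p + q`. -/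
def hMat (p q : ℕ) : Matrix (Fin (p + q)) (Fin (p + q)) ℝ :=
  Matrix.diagonal fun i => if (i : ℕ) < p then (1 : ℝ) else -1

/-- The quadratic form of signature `(p+1,q+1)` on `ℝ^{n+2}`, in block form
`[[0,0,1],[0,h,0],[1,0,0]]`. -/
def htMat (p q : ℕ) : Matrix (Idx p q) (Idx p q) ℝ :=
  Matrix.of fun I J =>
    match I, J with
    | Sum.inl _, Sum.inr (Sum.inr _) => (1 : ℝ)
    | Sum.inr (Sum.inr _), Sum.inl _ => 1
    | Sum.inr (Sum.inl i), Sum.inr (Sum.inl j) => hMat p q i j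
    | _, _ => 0

/-- The first standard basis vector `e₀` of `ℝ^{n+2}`. -/
def e0 (p q : ℕ) : Idx p q → ℝ := fun I =>
  match I with
  | Sum.inl _ => 1
  | _ => 0

/-- `c = -(2a)⁻¹ b h⁻¹ bᵀ`. -/
def cVal (p q : ℕ) (a : ℝ) (b : Fin (p + q) → ℝ) : ℝ :=
  -(2 * a)⁻¹ * (b ⬝ᵥ ((hMat p q)⁻¹ *ᵥ b))

/-- `d = -a⁻¹ m h⁻¹ bᵀ`. -/
def dVec (p q : ℕ) (a : ℝ) (b : Fin (p + q) → ℝ)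
    (m : Matrix (Fin (p + q)) (Fin (p + q)) ℝ) : Fin (p + q) → ℝ :=
  (-a⁻¹) • (m *ᵥ ((hMat p q)⁻¹ *ᵥ b))

/-- The element `p(a,b,m)` of the parabolic subgroup, in block form
`[[a,b,c],[0,m,d],[0,0,a⁻¹]]`. -/
def pMat (p q : ℕ) (a : ℝ) (b : Fin (p + q) → ℝ)
    (m : Matrix (Fin (p + q)) (Fin (p + q)) ℝ) : Matrix (Idx p q) (Idx p q) ℝ :=
  Matrix.of fun I J =>
    match I, J with
    | Sum.inl _, Sum.inl _ => a
    | Sum.inl _, Sum.inr (Sum.inl j) => b j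
    | Sum.inl _, Sum.inr (Sum.inr _) => cVal p q a b
    | Sum.inr (Sum.inl i), Sum.inr (Sum.inl j) => m i j
    | Sum.inr (Sum.inl i), Sum.inr (Sum.inr _) => dVec p q a b m i
    | Sum.inr (Sum.inr _), Sum.inr (Sum.inr _) => a⁻¹
    | _, _ => 0

/-- `|x|² = xᵀ h x`. -/
def normSq (p q : ℕ) (x : Fin (p + q) → ℝ) : ℝ := x ⬝ᵥ (hMat p q *ᵥ x)

/-- The denominator `D(x) = a + b x - ½ c |x|²`. -/
def Dden (p q : ℕ) (a : ℝ) (b x : Fin (p + q) → ℝ) : ℝ :=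
  a + b ⬝ᵥ x - (1 / 2) * cVal p q a b * normSq p q x

/-- The conformal transformation `φ(x) = (m x - ½|x|² d)/D(x)`. -/
def phiMap (p q : ℕ) (a : ℝ) (b : Fin (p + q) → ℝ)
    (m : Matrix (Fin (p + q)) (Fin (p + q)) ℝ) (x : Fin (p + q) → ℝ) :
    Fin (p + q) → ℝ :=
  (Dden p q a b x)⁻¹ • (m *ᵥ x - ((1 / 2) * normSq p q x) • dVec p q a b m)

/-- The conformal factor `Ω(x) = D(x)⁻¹`. -/
def OmegaFn (p q : ℕ) (a : ℝ) (b : Fin (p + q) → ℝ) (x : Fin (p + q) → ℝ) : ℝ :=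
  (Dden p q a b x)⁻¹

/-- Jacobian matrix of a map at a point: `J i j = ∂ⱼ φⁱ (x)`. -/
def jacobianAt (p q : ℕ) (φ : (Fin (p + q) → ℝ) → (Fin (p + q) → ℝ))
    (x : Fin (p + q) → ℝ) : Matrix (Fin (p + q)) (Fin (p + q)) ℝ :=
  Matrix.of fun i j => fderiv ℝ φ x (Pi.single j 1) i

/-- Row vector of partial derivatives of a scalar function at a point. -/
def gradAt (p q : ℕ) (f : (Fin (p + q) → ℝ) → ℝ) (x : Fin (p + q) → ℝ) :
    Fin (p + q) → ℝ :=
  fun j => fderiv ℝ f x (Pi.single j 1)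

/-- For every `a > 0`, row vector `b ∈ ℝⁿ` and `m ∈ O(h)`, the matrix `p(a,b,m)`
lies in `O(h̃)` and satisfies `p(a,b,m) e₀ = a e₀` (so `p(a,b,m) ∈ P`); moreover
`(a,b,m) ↦ p(a,b,m)` is injective on `ℝ₊ × ℝⁿ × O(h)`.  Hence `P` is parametrized
bijectively by `ℝ₊ × ℝⁿ × O(h)`. -/

lemma hMat_mul_self (p q : ℕ) : hMat p q * hMat p q = 1 := by
  rw [hMat, diagonal_mul_diagonal]
  convert Matrix.diagonal_one with i
  by_cases h : (i:ℕ) < p <;> simp [h]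

lemma hMat_inv (p q : ℕ) : (hMat p q)⁻¹ = hMat p q := inv_eq_left_inv (hMat_mul_self p q)

lemma hMat_transpose (p q : ℕ) : (hMat p q)ᵀ = hMat p q := Matrix.diagonal_transpose _

lemma key_iso (p q : ℕ) (m : Matrix (Fin (p+q)) (Fin (p+q)) ℝ)
    (hm : mᵀ * hMat p q * m = hMat p q) (v w : Fin (p+q) → ℝ) :
    (m *ᵥ v) ⬝ᵥ (hMat p q *ᵥ (m *ᵥ w)) = v ⬝ᵥ (hMat p q *ᵥ w) := by
  rw [mulVec_mulVec, dotProduct_mulVec, vecMul_mulVec, ← Matrix.mul_assoc, hm,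
    ← dotProduct_mulVec]

lemma key1 (p q : ℕ) (a : ℝ) (b : Fin (p + q) → ℝ)
    (m : Matrix (Fin (p + q)) (Fin (p + q)) ℝ)
    (hm : mᵀ * hMat p q * m = hMat p q) :
    (mᵀ * hMat p q) *ᵥ dVec p q a b m = (-a⁻¹) • b := by
  rw [dVec, hMat_inv, mulVec_smul, mulVec_mulVec, hm, mulVec_mulVec,
    hMat_mul_self, one_mulVec]

lemma swap_sum (p q : ℕ) (u v : Fin (p + q) → ℝ) :
    ∑ x : Fin (p + q), (∑ y : Fin (p + q), u y * hMat p q y x) * v x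
      = ∑ x : Fin (p + q), u x * ∑ y : Fin (p + q), hMat p q x y * v y := by
  calc ∑ x : Fin (p + q), (∑ y : Fin (p + q), u y * hMat p q y x) * v x
      = ∑ x : Fin (p + q), ∑ y : Fin (p + q), u y * hMat p q y x * v x := by
        exact Finset.sum_congr rfl fun x _ => by rw [Finset.sum_mul]
    _ = ∑ y : Fin (p + q), ∑ x : Fin (p + q), u y * hMat p q y x * v x := Finset.sum_comm
    _ = ∑ x : Fin (p + q), u x * ∑ y : Fin (p + q), hMat p q x y * v y := by
        refine Finset.sum_congr rfl fun y _ => ?_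
        rw [Finset.mul_sum]
        exact Finset.sum_congr rfl fun x _ => by ring

theorem statement1 (p q : ℕ) (hn : 3 ≤ p + q) :
    (∀ (a : ℝ), 0 < a → ∀ (b : Fin (p + q) → ℝ)
        (m : Matrix (Fin (p + q)) (Fin (p + q)) ℝ),
        mᵀ * hMat p q * m = hMat p q →
        (pMat p q a b m)ᵀ * htMat p q * pMat p q a b m = htMat p q ∧
        pMat p q a b m *ᵥ e0 p q = a • e0 p q) ∧
    (∀ (a₁ a₂ : ℝ) (b₁ b₂ : Fin (p + q) → ℝ)
        (m₁ m₂ : Matrix (Fin (p + q)) (Fin (p + q)) ℝ),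
        0 < a₁ → 0 < a₂ →
        m₁ᵀ * hMat p q * m₁ = hMat p q → m₂ᵀ * hMat p q * m₂ = hMat p q →
        pMat p q a₁ b₁ m₁ = pMat p q a₂ b₂ m₂ →
        a₁ = a₂ ∧ b₁ = b₂ ∧ m₁ = m₂) := by
  constructor
  · intro a ha b m hm
    have hane : a ≠ 0 := ne_of_gt ha
    have hkey1 := key1 p q a b m hm
    have hkey2 : dVec p q a b m ᵥ* (hMat p q * m) = (-a⁻¹) • b := by
      rw [← Matrix.mulVec_transpose, Matrix.transpose_mul, hMat_transpose, hkey1]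
    have hquad : dVec p q a b m ⬝ᵥ (hMat p q *ᵥ dVec p q a b m)
        = a⁻¹ * a⁻¹ * (b ⬝ᵥ (hMat p q *ᵥ b)) := by
      rw [dVec, hMat_inv]
      rw [smul_dotProduct, mulVec_smul, dotProduct_smul,
        key_iso p q m hm (hMat p q *ᵥ b) (hMat p q *ᵥ b), mulVec_mulVec, hMat_mul_self,
        one_mulVec, dotProduct_comm]
      rw [smul_smul, smul_eq_mul]
      ring
    refine ⟨?_, ?_⟩
    · ext I J
      rcases I with _ | i | _ <;> rcases J with _ | j | _ <;>
        simp [Matrix.mul_apply, Fintype.sum_sum_type, pMat, htMat, transpose_apply]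
      · field_simp
      · simpa [Matrix.mul_apply] using congrFun (congrFun hm i) j
      · have := congrFun hkey1 i
        simp only [mulVec, dotProduct, Matrix.mul_apply, transpose_apply, Pi.smul_apply,
          smul_eq_mul] at this
        rw [this]; ring
      · field_simp
      · have := congrFun hkey2 j
        simp only [vecMul, dotProduct, Matrix.mul_apply, Pi.smul_apply, smul_eq_mul] at this
        rw [swap_sum p q, this]; ring
      · have hq : ∑ x : Fin (p + q),
            (∑ x_1 : Fin (p + q), dVec p q a b m x_1 * hMat p q x_1 x) * dVec p q a b m x
            = a⁻¹ * a⁻¹ * (b ⬝ᵥ (hMat p q *ᵥ b)) := by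
          rw [swap_sum p q, ← hquad]
          rfl
        rw [hq, cVal, hMat_inv]
        field_simp
        ring
    · ext I
      rcases I with _ | i | _ <;>
        simp [pMat, e0, mulVec, dotProduct, Fintype.sum_sum_type]
  · intro a₁ a₂ b₁ b₂ m₁ m₂ ha₁ ha₂ hm₁ hm₂ heq
    refine ⟨?_, ?_, ?_⟩
    · simpa [pMat] using congrFun (congrFun heq (Sum.inl ())) (Sum.inl ())
    · funext j
      simpa [pMat] using congrFun (congrFun heq (Sum.inl ())) (Sum.inr (Sum.inl j))
    · ext i j
      simpa [pMat] using
        congrFun (congrFun heq (Sum.inr (Sum.inl i))) (Sum.inr (Sum.inl j))
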